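/- Let ⟨I, S⟩ be an X3C instance with |I| = 3η items, μ ≥ η sets, each item contained in at most 3 sets, let M be a positive integer, and let the unweighted graph G with its clustering and vertices s = u_1^0 and t = u_μ^3 be the associated CluSP instance. If there exists a clustered s–t path in G with fewer than M edges, then ⟨I, S⟩ admits an exact cover. -/

import Mathlib

open SimpleGraph

/-- Vertices of the CluSP hardness graph associated with an X3C instance:
`u j t` (t = 0,1,2,3) for each set `S j`; `item i` is the vertex `v_i`;
`ipath i j t` are the vertices of the length-`M` path attached to `v_i`
corresponding to the set `S j` containing item `i` (its last vertex, with
`t = M - 1`, is the vertex `v_i^h`); `y z` and `ypath z j t` similarly form the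
`y`-gadgets (the last path vertex is `y_z^j`). -/
inductive XVtx (η μ M : ℕ) where
  | u : Fin μ → Fin 4 → XVtx η μ M
  | item : Fin (3 * η) → XVtx η μ M
  | ipath : Fin (3 * η) → Fin μ → Fin M → XVtx η μ M
  | y : Fin (μ - η) → XVtx η μ M
  | ypath : Fin (μ - η) → Fin μ → Fin M → XVtx η μ M
  deriving DecidableEq

/-- The rank (0, 1 or 2) of item `i` within the 3-element set `S j`. -/
def rankIn {η μ : ℕ} (S : Fin μ → Finset (Fin (3 * η))) (i : Fin (3 * η)) (j : Fin μ) : ℕ :=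
  ((S j).filter (· < i)).card

/-- Base adjacency relation of the X3C reduction graph. -/
def xRel {η μ M : ℕ} (S : Fin μ → Finset (Fin (3 * η))) :
    XVtx η μ M → XVtx η μ M → Prop
  | .u j t, .u j' t' => (t : ℕ) = 3 ∧ (t' : ℕ) = 0 ∧ (j : ℕ) + 1 = (j' : ℕ)
  | .u j t, .ipath i j' t' => j = j' ∧ i ∈ S j ∧ (t' : ℕ) = M - 1 ∧
      ((t : ℕ) = rankIn S i j ∨ (t : ℕ) = rankIn S i j + 1)
  | .item i, .ipath i' j t => i = i' ∧ i ∈ S j ∧ (t : ℕ) = 0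
  | .ipath i j t, .ipath i' j' t' => i = i' ∧ j = j' ∧ i ∈ S j ∧ (t' : ℕ) = (t : ℕ) + 1
  | .y z, .ypath z' _ t => z = z' ∧ (t : ℕ) = 0
  | .ypath z j t, .ypath z' j' t' => z = z' ∧ j = j' ∧ (t' : ℕ) = (t : ℕ) + 1
  | .u j t, .ypath _ j' t' => j = j' ∧ (t' : ℕ) = M - 1 ∧ ((t : ℕ) = 0 ∨ (t : ℕ) = 3)
  | _, _ => False

def xGraph {η μ M : ℕ} (S : Fin μ → Finset (Fin (3 * η))) : SimpleGraph (XVtx η μ M) :=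
  SimpleGraph.fromRel (xRel S)

/-- The clusters: for each item `i`, the vertex `v_i` together with all vertices of
the attached paths; for each `z`, the vertex `y_z` together with all vertices of its
attached paths; all remaining vertices lie in singleton clusters. -/
def xClusters (η μ M : ℕ) (S : Fin μ → Finset (Fin (3 * η))) : Set (Set (XVtx η μ M)) :=
  {Cl | (∃ i, Cl = {x | x = XVtx.item i ∨ ∃ j t, i ∈ S j ∧ x = XVtx.ipath i j t}) ∨
        (∃ z, Cl = {x | x = XVtx.y z ∨ ∃ j t, x = XVtx.ypath z j t}) ∨
        (∃ v, Cl = {v})}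

/-- The elements of `Cl` occurring in the list `l` occur consecutively. -/
def ConsecutiveIn {α : Type*} (Cl : Set α) (l : List α) : Prop :=
  ∃ l₁ l₂ l₃ : List α, l = l₁ ++ l₂ ++ l₃ ∧ (∀ x ∈ l₂, x ∈ Cl) ∧
    (∀ x ∈ l₁, x ∉ Cl) ∧ (∀ x ∈ l₃, x ∉ Cl)

/-- The X3C instance admits an exact cover: a subcollection of `η` of the sets
covering each item exactly once. -/
def HasExactCover {η μ : ℕ} (S : Fin μ → Finset (Fin (3 * η))) : Prop :=
  ∃ E : Finset (Fin μ), E.card = η ∧ ∀ i : Fin (3 * η), ∃! j, j ∈ E ∧ i ∈ S j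

namespace XAux
variable {η μ M : ℕ} {S : Fin μ → Finset (Fin (3 * η))}

def xDep : XVtx η μ M → ℕ
  | .u _ _ => 0
  | .item _ => M
  | .ipath _ _ t => M - 1 - t
  | .y _ => M
  | .ypath _ _ t => M - 1 - t

def xBlk : XVtx η μ M → ℕ
  | .u j _ => j
  | .ipath _ j _ => j
  | .ypath _ j _ => j
  | _ => 0

def xRnk (S : Fin μ → Finset (Fin (3 * η))) : XVtx η μ M → ℕ
  | .u _ t => 2 * t
  | .ipath i j _ => 2 * rankIn S i j + 1
  | _ => 0

lemma adj_cases {x y : XVtx η μ M} (h : (xGraph S).Adj x y) :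
    xRel S x y ∨ xRel S y x := ((SimpleGraph.fromRel_adj _ _ _).mp h).2

lemma rel_lip {x y : XVtx η μ M} (h : xRel S x y) :
    xDep x ≤ xDep y + 1 ∧ xDep y ≤ xDep x + 1 := by
  cases x <;> cases y <;> simp only [xRel] at h <;> try (exact h.elim)
  all_goals simp only [xDep]
  case u.u => omega
  case u.ipath j t i j' t' =>
    obtain ⟨-, -, ht', -⟩ := h; omega
  case item.ipath i i' j t =>
    obtain ⟨-, -, ht⟩ := h
    have := t.isLt; omega
  case ipath.ipath i j t i' j' t' =>
    obtain ⟨-, -, -, ht⟩ := h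
    have := t'.isLt; omega
  case y.ypath z z' j t =>
    obtain ⟨-, ht⟩ := h
    have := t.isLt; omega
  case ypath.ypath z j t z' j' t' =>
    obtain ⟨-, -, ht⟩ := h
    have := t'.isLt; omega
  case u.ypath j t z j' t' =>
    obtain ⟨-, ht', -⟩ := h; omega

lemma adj_lip {x y : XVtx η μ M} (h : (xGraph S).Adj x y) :
    xDep x ≤ xDep y + 1 ∧ xDep y ≤ xDep x + 1 := by
  rcases adj_cases h with h | h
  · exact rel_lip h
  · exact (rel_lip h).symm
def Ci (S : Fin μ → Finset (Fin (3 * η))) (i : Fin (3 * η)) : Set (XVtx η μ M) :=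
  {x | x = XVtx.item i ∨ ∃ j t, i ∈ S j ∧ x = XVtx.ipath i j t}

def Cy (z : Fin (μ - η)) : Set (XVtx η μ M) :=
  {x | x = XVtx.y z ∨ ∃ j t, x = XVtx.ypath z j t}

lemma u_not_mem_Ci {j : Fin μ} {t : Fin 4} {i} : (XVtx.u j t : XVtx η μ M) ∉ Ci S i := by
  simp [Ci]

lemma u_not_mem_Cy {j : Fin μ} {t : Fin 4} {z} : (XVtx.u j t : XVtx η μ M) ∉ Cy z := by
  simp [Cy]

-- entering an item cluster happens at a tip
lemma enter_Ci {x y : XVtx η μ M} {i} (h : (xGraph S).Adj x y)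
    (hx : x ∉ Ci S i) (hy : y ∈ Ci S i) : xDep y = 0 := by
  rcases hy with hy | ⟨j, t, hij, hy⟩
  · subst hy
    exfalso
    rcases adj_cases h with h' | h' <;> cases x <;> simp only [xRel] at h' <;> try exact h'
    case inr.ipath i' j t =>
      obtain ⟨hi, hij, -⟩ := h'
      exact hx (Or.inr ⟨j, t, hi ▸ hij, by rw [hi]⟩)
  · subst hy
    rcases adj_cases h with h' | h' <;> cases x <;> simp only [xRel] at h' <;> try exact h'.elim
    · rename_i j' t'
      obtain ⟨-, -, ht, -⟩ := h'
      simp only [xDep]; omega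
    · rename_i i'
      obtain ⟨hi, -, -⟩ := h'
      exact absurd (Or.inl (by rw [hi])) hx
    · rename_i i' j' t'
      obtain ⟨hi, hj, hmem, -⟩ := h'
      exact absurd (Or.inr ⟨j', t', by rw [← hi] at hij ⊢; exact ⟨hj ▸ hmem, rfl⟩⟩) hx
    · rename_i i' j' t'
      obtain ⟨hi, hj, hmem, -⟩ := h'
      exact absurd (Or.inr ⟨j', t', hj ▸ hmem, by rw [hi]⟩) hx

lemma enter_Cy {x y : XVtx η μ M} {z} (h : (xGraph S).Adj x y)
    (hx : x ∉ Cy z) (hy : y ∈ Cy z) : xDep y = 0 := by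
  rcases hy with hy | ⟨j, t, hy⟩
  · subst hy
    exfalso
    rcases adj_cases h with h' | h' <;> cases x <;> simp only [xRel] at h' <;> try exact h'
    case inr.ypath z' j t =>
      obtain ⟨hz, -⟩ := h'
      exact hx (Or.inr ⟨j, t, by rw [hz]⟩)
  · subst hy
    rcases adj_cases h with h' | h' <;> cases x <;> simp only [xRel] at h' <;> try exact h'.elim
    · rename_i j' t'
      obtain ⟨-, ht, -⟩ := h'
      simp only [xDep]; omega
    · rename_i z'
      obtain ⟨hz, -⟩ := h'
      exact absurd (Or.inl (by rw [hz])) hx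
    · rename_i z' j' t'
      obtain ⟨hz, hj, -⟩ := h'
      exact absurd (Or.inr ⟨j', t', by rw [hz]⟩) hx
    · rename_i z' j' t'
      obtain ⟨hz, hj, -⟩ := h'
      exact absurd (Or.inr ⟨j', t', by rw [hz]⟩) hx

/-- dep-0 members of an item cluster are tips. -/
lemma Ci_dep0 {x : XVtx η μ M} {i} (hM : 0 < M) (hx : x ∈ Ci S i) (hd : xDep x = 0) :
    ∃ j, i ∈ S j ∧ x = XVtx.ipath i j ⟨M - 1, by omega⟩ := by
  rcases hx with rfl | ⟨j, t, hij, rfl⟩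
  · simp only [xDep] at hd; omega
  · refine ⟨j, hij, ?_⟩
    simp only [xDep] at hd
    have := t.isLt
    congr 1
    exact Fin.ext (by show (t:ℕ) = M - 1; omega)

lemma Cy_dep0 {x : XVtx η μ M} {z} (hM : 0 < M) (hx : x ∈ Cy z) (hd : xDep x = 0) :
    ∃ j, x = XVtx.ypath z j ⟨M - 1, by omega⟩ := by
  rcases hx with rfl | ⟨j, t, rfl⟩
  · simp only [xDep] at hd; omega
  · refine ⟨j, ?_⟩
    simp only [xDep] at hd
    have := t.isLt
    congr 1
    exact Fin.ext (by show (t:ℕ) = M - 1; omega)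

/-- adjacency inside an item cluster, away from the center, preserves the block. -/
lemma adj_in_Ci {x y : XVtx η μ M} {i} (h : (xGraph S).Adj x y)
    (hx : x ∈ Ci S i) (hy : y ∈ Ci S i)
    (hx' : x ≠ XVtx.item i) (hy' : y ≠ XVtx.item i) : xBlk x = xBlk y := by
  rcases hx with rfl | ⟨j, t, hij, rfl⟩
  · exact absurd rfl hx'
  rcases hy with rfl | ⟨j', t', hij', rfl⟩
  · exact absurd rfl hy'
  rcases adj_cases h with h' | h' <;> simp only [xRel] at h' <;>
    obtain ⟨-, hj, -, -⟩ := h' <;> simp [xBlk, hj]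

lemma adj_in_Cy {x y : XVtx η μ M} {z} (h : (xGraph S).Adj x y)
    (hx : x ∈ Cy z) (hy : y ∈ Cy z)
    (hx' : x ≠ XVtx.y z) (hy' : y ≠ XVtx.y z) : xBlk x = xBlk y := by
  rcases hx with rfl | ⟨j, t, rfl⟩
  · exact absurd rfl hx'
  rcases hy with rfl | ⟨j', t', rfl⟩
  · exact absurd rfl hy'
  rcases adj_cases h with h' | h' <;> simp only [xRel] at h' <;>
    obtain ⟨-, hj, -⟩ := h' <;> simp [xBlk, hj]

/-- any neighbour of an `ipath` vertex certifies membership of the item. -/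
lemma adj_ipath_mem {x : XVtx η μ M} {i j t} (h : (xGraph S).Adj x (XVtx.ipath i j t)) :
    i ∈ S j := by
  rcases adj_cases h with h' | h' <;> cases x <;> simp only [xRel] at h' <;> try exact h'.elim
  · obtain ⟨rfl, hmem, -⟩ := h'; exact hmem
  · obtain ⟨rfl, hmem, -⟩ := h'; exact hmem
  · obtain ⟨rfl, rfl, hmem, -⟩ := h'; exact hmem
  · obtain ⟨rfl, rfl, hmem, -⟩ := h'; exact hmem


def xGood (S : Fin μ → Finset (Fin (3 * η))) (x : XVtx η μ M) : Prop :=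
  (∃ j t, x = XVtx.u j t) ∨
  (∃ (i : Fin (3 * η)) (j : Fin μ) (t : Fin M), i ∈ S j ∧ (t : ℕ) = M - 1 ∧ x = XVtx.ipath i j t) ∨
  (∃ (z : Fin (μ - η)) (j : Fin μ) (t : Fin M), (t : ℕ) = M - 1 ∧ x = XVtx.ypath z j t)

def Fwd (x y : XVtx η μ M) : Prop :=
  ∃ (j j' : Fin μ) (t t' : Fin 4), (t : ℕ) = 3 ∧ (t' : ℕ) = 0 ∧ (j : ℕ) + 1 = (j' : ℕ) ∧
    x = XVtx.u j t ∧ y = XVtx.u j' t'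

def IsYp (x : XVtx η μ M) : Prop := ∃ z j t, x = XVtx.ypath z j t

lemma fwd_blk {x y : XVtx η μ M} (h : Fwd x y) : xBlk x + 1 = xBlk y := by
  obtain ⟨j, j', t, t', -, -, hj, rfl, rfl⟩ := h
  simpa [xBlk] using hj

lemma adj_good (hM : 0 < M) {x y : XVtx η μ M} (hx : xGood S x) (hy : xGood S y)
    (h : (xGraph S).Adj x y) :
    Fwd x y ∨ Fwd y x ∨ (xBlk x = xBlk y ∧
      (IsYp x ∨ IsYp y ∨ xRnk S x + 1 = xRnk S y ∨ xRnk S y + 1 = xRnk S x)) := by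
  obtain ⟨j, t, rfl⟩ | ⟨i, j, t, hij, ht, rfl⟩ | ⟨z, j, t, ht, rfl⟩ := hx <;>
    obtain ⟨j', t', rfl⟩ | ⟨i', j', t', hij', ht', rfl⟩ | ⟨z', j', t', ht', rfl⟩ := hy <;>
    rcases adj_cases h with h' | h' <;> simp only [xRel] at h' <;> try exact h'.elim
  · exact Or.inl ⟨j, j', t, t', h'.1, h'.2.1, h'.2.2, rfl, rfl⟩
  · exact Or.inr (Or.inl ⟨j', j, t', t, h'.1, h'.2.1, h'.2.2, rfl, rfl⟩)
  · obtain ⟨rfl, hmem, -, hr | hr⟩ := h' <;>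
      [skip; skip] <;> refine Or.inr (Or.inr ⟨by simp [xBlk], Or.inr (Or.inr ?_)⟩)
    · exact Or.inl (by simp only [xRnk]; omega)
    · exact Or.inr (by simp only [xRnk]; omega)
  · obtain ⟨rfl, -, -⟩ := h'
    exact Or.inr (Or.inr ⟨by simp [xBlk], Or.inr (Or.inl ⟨z', j, t', rfl⟩)⟩)
  · obtain ⟨rfl, hmem, -, hr | hr⟩ := h' <;>
      [skip; skip] <;> refine Or.inr (Or.inr ⟨by simp [xBlk], Or.inr (Or.inr ?_)⟩)
    · exact Or.inr (by simp only [xRnk]; omega)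
    · exact Or.inl (by simp only [xRnk]; omega)
  · obtain ⟨-, -, -, habs⟩ := h'; omega
  · obtain ⟨-, -, -, habs⟩ := h'; omega
  · obtain ⟨rfl, -, -⟩ := h'
    exact Or.inr (Or.inr ⟨by simp [xBlk], Or.inl ⟨z, j', t, rfl⟩⟩)
  · obtain ⟨-, -, habs⟩ := h'; omega
  · obtain ⟨-, -, habs⟩ := h'; omega

lemma rank_lt_three {i : Fin (3 * η)} {j : Fin μ} (hc : (S j).card = 3) (hij : i ∈ S j) :
    rankIn S i j < 3 := by
  have hsub : (S j).filter (· < i) ⊆ (S j).erase i := by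
    intro x hx
    simp only [Finset.mem_filter] at hx
    exact Finset.mem_erase.mpr ⟨ne_of_lt hx.2, hx.1⟩
  have := Finset.card_le_card hsub
  rw [Finset.card_erase_of_mem hij, hc] at this
  exact lt_of_le_of_lt this (by omega)

lemma rank_strictMono {i i' : Fin (3 * η)} {j : Fin μ} (hi : i ∈ S j) (hi' : i' ∈ S j) (hlt : i < i') :
    rankIn S i j < rankIn S i' j := by
  apply Finset.card_lt_card
  constructor
  · intro x hx
    simp only [Finset.mem_filter] at hx ⊢
    exact ⟨hx.1, lt_trans hx.2 hlt⟩
  · intro hsub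
    have : i ∈ (S j).filter (· < i) := hsub (by simp only [Finset.mem_filter]; exact ⟨hi, hlt⟩)
    simp [Finset.mem_filter] at this

lemma rank_inj {i i' : Fin (3 * η)} {j : Fin μ} (hi : i ∈ S j) (hi' : i' ∈ S j)
    (h : rankIn S i j = rankIn S i' j) : i = i' := by
  rcases lt_trichotomy i i' with hlt | heq | hlt
  · exact absurd h (ne_of_lt (rank_strictMono hi hi' hlt))
  · exact heq
  · exact absurd h.symm (ne_of_lt (rank_strictMono hi' hi hlt))

end XAux


set_option maxHeartbeats 1000000 in
open XAux in
theorem stmt15 (η μ M : ℕ) (hμpos : 0 < μ) (hημ : η ≤ μ) (hM : 0 < M)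
    (S : Fin μ → Finset (Fin (3 * η)))
    (hcard : ∀ j, (S j).card = 3)
    (hocc : ∀ i, (Finset.univ.filter fun j => i ∈ S j).card ≤ 3)
    (hpath : ∃ p : (xGraph S : SimpleGraph (XVtx η μ M)).Walk
        (XVtx.u ⟨0, hμpos⟩ ⟨0, by omega⟩) (XVtx.u ⟨μ - 1, by omega⟩ ⟨3, by omega⟩),
      p.IsPath ∧ (∀ Cl ∈ xClusters η μ M S, ConsecutiveIn Cl p.support) ∧
      p.length < M) :
    HasExactCover S := by
  classical
  obtain ⟨p, hp, hcl, hlen⟩ := hpath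
  set N := p.length with hNdef
  have hlenL : p.support.length = N + 1 := p.length_support
  set g : ℕ → XVtx η μ M := fun k => p.support.getD k (XVtx.u ⟨0, hμpos⟩ ⟨0, by omega⟩)
    with hgdef
  have hgget : ∀ k, k ≤ N → ∀ (h : k < p.support.length), g k = p.support[k] := by
    intro k hk h
    simp only [hgdef]
    exact List.getD_eq_getElem _ _ h
  have hNM : N < M := hlen
  have hadj : ∀ k, k < N → (xGraph S).Adj (g k) (g (k + 1)) := by
    intro k hk
    have hchain := p.isChain_adj_support
    rw [List.isChain_iff_getElem] at hchain
    have := hchain k (by omega)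
    rwa [hgget k (by omega) (by omega), hgget (k+1) (by omega) (by omega)]
  have hinj : ∀ k l, k ≤ N → l ≤ N → g k = g l → k = l := by
    intro k l hk hl he
    rw [hgget k hk (by omega), hgget l hl (by omega)] at he
    exact (List.Nodup.getElem_inj_iff hp.support_nodup).mp he
  have hg0 : g 0 = XVtx.u ⟨0, hμpos⟩ ⟨0, by omega⟩ := by
    rw [hgget 0 (by omega) (by omega)]
    have := p.head_support
    rwa [List.head_eq_getElem] at this
  have hgN : g N = XVtx.u ⟨μ - 1, by omega⟩ ⟨3, by omega⟩ := by
    rw [hgget N (by omega) (by omega)]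
    have := p.getLast_support
    rw [List.getLast_eq_getElem] at this
    simpa [hlenL] using this
  have hN1 : 1 ≤ N := by
    by_contra h
    have hN0 : N = 0 := by omega
    rw [hN0] at hgN
    rw [hg0] at hgN
    have := congrArg xBlk hgN
    have h2 : (XVtx.u (⟨0, hμpos⟩ : Fin μ) (⟨0, by omega⟩ : Fin 4) : XVtx η μ M) ≠
        XVtx.u ⟨μ - 1, by omega⟩ ⟨3, by omega⟩ := by
      intro hc
      injection hc with h1 h2
      have := congrArg Fin.val h2
      simp at this
    exact h2 hgN
  -- convexity of clusters along the path
  have hconv : ∀ Cl ∈ xClusters η μ M S, ∀ k1 k2 k3 : ℕ, k1 ≤ k2 → k2 ≤ k3 → k3 ≤ N →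
      g k1 ∈ Cl → g k3 ∈ Cl → g k2 ∈ Cl := by
    intro Cl hClmem k1 k2 k3 h12 h23 h3N hm1 hm3
    obtain ⟨l₁, l₂, l₃, hsp, hin2, hout1, hout3⟩ := hcl Cl hClmem
    have hlen123 : p.support.length = l₁.length + l₂.length + l₃.length := by
      rw [hsp]; simp; omega
    have hpos : ∀ k, k ≤ N → g k ∈ Cl → l₁.length ≤ k ∧ k < l₁.length + l₂.length := by
      intro k hk hmem
      rw [hgget k hk (by omega)] at hmem
      constructor
      · by_contra hlt
        push_neg at hlt
        have he : p.support[k]'(by omega) = l₁[k]'(by omega) := by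
          simp only [hsp]
          rw [List.getElem_append_left (by simp; omega), List.getElem_append_left hlt]
        exact hout1 _ (he ▸ List.getElem_mem _) hmem
      · by_contra hge
        push_neg at hge
        have he : p.support[k]'(by omega) = l₃[k - (l₁.length + l₂.length)]'(by omega) := by
          simp only [hsp]
          rw [List.getElem_append_right (by simp; omega)]
          congr 1
          simp
        exact hout3 _ (he ▸ List.getElem_mem _) hmem
    have h1 := hpos k1 (by omega) hm1
    have h3 := hpos k3 h3N hm3
    rw [hgget k2 (by omega) (by omega)]
    have he : p.support[k2]'(by omega) = l₂[k2 - l₁.length]'(by omega) := by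
      simp only [hsp]
      rw [List.getElem_append_left (by simp; omega), List.getElem_append_right (by omega)]
    exact hin2 _ (he ▸ List.getElem_mem _)
  -- Lipschitz bound on depth
  have hlip' : ∀ a m, a ≤ m → m ≤ N → xDep (g m) ≤ xDep (g a) + (m - a) := by
    intro a m
    induction m with
    | zero => intro ha _; interval_cases a; simp
    | succ m ih =>
      intro ham hmN
      rcases Nat.lt_or_ge a (m + 1) with hlt | hge
      · have h1 := ih (by omega) (by omega)
        have h2 := (adj_lip (hadj m (by omega))).2
        omega
      · have : a = m + 1 := by omega
        subst this; simp
  have hCiCl : ∀ i, (Ci S i : Set (XVtx η μ M)) ∈ xClusters η μ M S := fun i => Or.inl ⟨i, rfl⟩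
  have hCyCl : ∀ z, (Cy z : Set (XVtx η μ M)) ∈ xClusters η μ M S :=
    fun z => Or.inr (Or.inl ⟨z, rfl⟩)
  have hsingleCi : ∀ (i : Fin (3 * η)) a b, a ≤ b → b ≤ N → g a ∈ Ci S i → g b ∈ Ci S i →
      xDep (g a) = 0 → xDep (g b) = 0 → a = b := by
    intro i a b hab hbN hga hgb hda hdb
    by_cases hcen : ∃ m, a ≤ m ∧ m ≤ b ∧ g m = XVtx.item i
    · exfalso
      obtain ⟨m, ham, hmb, hm⟩ := hcen
      have h1 := hlip' a m ham (by omega)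
      rw [hm, hda] at h1
      have hXX : xDep (XVtx.item i : XVtx η μ M) = M := rfl
      rw [hXX] at h1
      omega
    · push_neg at hcen
      have hbr : ∀ m, a ≤ m → m ≤ b → xBlk (g m) = xBlk (g a) := by
        intro m
        induction m with
        | zero =>
          intro h _
          have h0 : a = 0 := by omega
          rw [h0]
        | succ m ih =>
          intro ham hmb
          rcases Nat.lt_or_ge a (m + 1) with hlt | hge
          · have hmem1 : g m ∈ Ci S i :=
              hconv _ (hCiCl i) a m b (by omega) (by omega) hbN hga hgb
            have hmem2 : g (m + 1) ∈ Ci S i :=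
              hconv _ (hCiCl i) a (m + 1) b (by omega) hmb hbN hga hgb
            have hblk := adj_in_Ci (hadj m (by omega)) hmem1 hmem2
              (hcen m (by omega) (by omega)) (hcen (m + 1) (by omega) hmb)
            rw [← hblk]
            exact ih (by omega) (by omega)
          · have h0 : a = m + 1 := by omega
            rw [h0]
      obtain ⟨ja, hja, hea⟩ := Ci_dep0 hM hga hda
      obtain ⟨jb, hjb, heb⟩ := Ci_dep0 hM hgb hdb
      have hbb := hbr b (by omega) le_rfl
      rw [hea, heb] at hbb
      simp only [xBlk] at hbb
      have hje : jb = ja := Fin.ext hbb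
      subst hje
      exact hinj a b (by omega) hbN (by rw [hea, heb])
  have hsingleCy : ∀ (z : Fin (μ - η)) a b, a ≤ b → b ≤ N → g a ∈ Cy z → g b ∈ Cy z →
      xDep (g a) = 0 → xDep (g b) = 0 → a = b := by
    intro z a b hab hbN hga hgb hda hdb
    by_cases hcen : ∃ m, a ≤ m ∧ m ≤ b ∧ g m = XVtx.y z
    · exfalso
      obtain ⟨m, ham, hmb, hm⟩ := hcen
      have h1 := hlip' a m ham (by omega)
      rw [hm, hda] at h1
      have hXX : xDep (XVtx.y z : XVtx η μ M) = M := rfl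
      rw [hXX] at h1
      omega
    · push_neg at hcen
      have hbr : ∀ m, a ≤ m → m ≤ b → xBlk (g m) = xBlk (g a) := by
        intro m
        induction m with
        | zero =>
          intro h _
          have h0 : a = 0 := by omega
          rw [h0]
        | succ m ih =>
          intro ham hmb
          rcases Nat.lt_or_ge a (m + 1) with hlt | hge
          · have hmem1 : g m ∈ Cy z :=
              hconv _ (hCyCl z) a m b (by omega) (by omega) hbN hga hgb
            have hmem2 : g (m + 1) ∈ Cy z :=
              hconv _ (hCyCl z) a (m + 1) b (by omega) hmb hbN hga hgb
            have hblk := adj_in_Cy (hadj m (by omega)) hmem1 hmem2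
              (hcen m (by omega) (by omega)) (hcen (m + 1) (by omega) hmb)
            rw [← hblk]
            exact ih (by omega) (by omega)
          · have h0 : a = m + 1 := by omega
            rw [h0]
      obtain ⟨ja, hea⟩ := Cy_dep0 hM hga hda
      obtain ⟨jb, heb⟩ := Cy_dep0 hM hgb hdb
      have hbb := hbr b (by omega) le_rfl
      rw [hea, heb] at hbb
      simp only [xBlk] at hbb
      have hje : jb = ja := Fin.ext hbb
      subst hje
      exact hinj a b (by omega) hbN (by rw [hea, heb])
  have hdepCi : ∀ (i : Fin (3 * η)) k, k ≤ N → g k ∈ Ci S i → xDep (g k) = 0 := by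
    intro i k hk hkCi
    have hex : ∃ m, g m ∈ Ci S i ∧ m ≤ N := ⟨k, hkCi, hk⟩
    obtain ⟨hga, haN⟩ := Nat.find_spec hex
    set a := Nat.find hex with hadef
    have hak : a ≤ k := Nat.find_le ⟨hkCi, hk⟩
    have ha1 : 0 < a := by
      rcases Nat.eq_zero_or_pos a with h0 | h
      · exfalso; rw [h0, hg0] at hga; exact u_not_mem_Ci hga
      · exact h
    have hprev : g (a - 1) ∉ Ci S i := fun hmem =>
      (Nat.find_min hex (show a - 1 < a by omega)) ⟨hmem, by omega⟩
    have hadj' : (xGraph S).Adj (g (a - 1)) (g a) := by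
      have h := hadj (a - 1) (by omega)
      rwa [show a - 1 + 1 = a by omega] at h
    have hda : xDep (g a) = 0 := enter_Ci hadj' hprev hga
    have hex' : ∃ m, g (N - m) ∈ Ci S i :=
      ⟨N - k, by rw [show N - (N - k) = k by omega]; exact hkCi⟩
    have hgb : g (N - Nat.find hex') ∈ Ci S i := Nat.find_spec hex'
    set m0 := Nat.find hex' with hm0def
    have hm0k : m0 ≤ N - k :=
      Nat.find_le (by rw [show N - (N - k) = k by omega]; exact hkCi)
    have hm01 : 0 < m0 := by
      rcases Nat.eq_zero_or_pos m0 with h0 | h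
      · exfalso; rw [h0, Nat.sub_zero, hgN] at hgb; exact u_not_mem_Ci hgb
      · exact h
    set b := N - m0 with hbdef
    have hkb : k ≤ b := by omega
    have hbN : b < N := by omega
    have hnext : g (b + 1) ∉ Ci S i := by
      intro hmem
      exact Nat.find_min hex' (show N - (b + 1) < m0 by omega)
        (by rw [show N - (N - (b + 1)) = b + 1 by omega]; exact hmem)
    have hdb : xDep (g b) = 0 := enter_Ci ((hadj b hbN).symm) hnext hgb
    have hab : a = b := hsingleCi i a b (by omega) (by omega) hga hgb hda hdb
    have hka : k = a := by omega
    rw [hka]; exact hda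
  have hdepCy : ∀ (z : Fin (μ - η)) k, k ≤ N → g k ∈ Cy z → xDep (g k) = 0 := by
    intro z k hk hkCy
    have hex : ∃ m, g m ∈ Cy z ∧ m ≤ N := ⟨k, hkCy, hk⟩
    obtain ⟨hga, haN⟩ := Nat.find_spec hex
    set a := Nat.find hex with hadef
    have hak : a ≤ k := Nat.find_le ⟨hkCy, hk⟩
    have ha1 : 0 < a := by
      rcases Nat.eq_zero_or_pos a with h0 | h
      · exfalso; rw [h0, hg0] at hga; exact u_not_mem_Cy hga
      · exact h
    have hprev : g (a - 1) ∉ Cy z := fun hmem =>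
      (Nat.find_min hex (show a - 1 < a by omega)) ⟨hmem, by omega⟩
    have hadj' : (xGraph S).Adj (g (a - 1)) (g a) := by
      have h := hadj (a - 1) (by omega)
      rwa [show a - 1 + 1 = a by omega] at h
    have hda : xDep (g a) = 0 := enter_Cy hadj' hprev hga
    have hex' : ∃ m, g (N - m) ∈ Cy z :=
      ⟨N - k, by rw [show N - (N - k) = k by omega]; exact hkCy⟩
    have hgb : g (N - Nat.find hex') ∈ Cy z := Nat.find_spec hex'
    set m0 := Nat.find hex' with hm0def
    have hm0k : m0 ≤ N - k :=
      Nat.find_le (by rw [show N - (N - k) = k by omega]; exact hkCy)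
    have hm01 : 0 < m0 := by
      rcases Nat.eq_zero_or_pos m0 with h0 | h
      · exfalso; rw [h0, Nat.sub_zero, hgN] at hgb; exact u_not_mem_Cy hgb
      · exact h
    set b := N - m0 with hbdef
    have hkb : k ≤ b := by omega
    have hbN : b < N := by omega
    have hnext : g (b + 1) ∉ Cy z := by
      intro hmem
      exact Nat.find_min hex' (show N - (b + 1) < m0 by omega)
        (by rw [show N - (N - (b + 1)) = b + 1 by omega]; exact hmem)
    have hdb : xDep (g b) = 0 := enter_Cy ((hadj b hbN).symm) hnext hgb
    have hab : a = b := hsingleCy z a b (by omega) (by omega) hga hgb hda hdb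
    have hka : k = a := by omega
    rw [hka]; exact hda
  have hmemS : ∀ k, k ≤ N → ∀ i j t, g k = XVtx.ipath i j t → i ∈ S j := by
    intro k hk i j t hgk
    rcases Nat.lt_or_ge k N with hlt | hge
    · have h := (hadj k hlt).symm
      rw [hgk] at h
      exact adj_ipath_mem h
    · have hkN : k = N := by omega
      have h := hadj (k - 1) (by omega)
      rw [show k - 1 + 1 = k by omega, hgk] at h
      exact adj_ipath_mem h
  have htip : ∀ k, k ≤ N → xGood S (g k) := by
    intro k hk
    rcases hgk : g k with ⟨j, t⟩ | i | ⟨i, j, t⟩ | z | ⟨z, j, t⟩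
    · exact Or.inl ⟨j, t, rfl⟩
    · exfalso
      have hmem : g k ∈ Ci S i := by rw [hgk]; exact Or.inl rfl
      have hd := hdepCi i k hk hmem
      rw [hgk] at hd
      simp only [xDep] at hd
      omega
    · have hms := hmemS k hk i j t hgk
      have hmem : g k ∈ Ci S i := by rw [hgk]; exact Or.inr ⟨j, t, hms, rfl⟩
      have hd := hdepCi i k hk hmem
      rw [hgk] at hd
      simp only [xDep] at hd
      have hti := t.isLt
      exact Or.inr (Or.inl ⟨i, j, t, hms, by omega, rfl⟩)
    · exfalso
      have hmem : g k ∈ Cy z := by rw [hgk]; exact Or.inl rfl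
      have hd := hdepCy z k hk hmem
      rw [hgk] at hd
      simp only [xDep] at hd
      omega
    · have hmem : g k ∈ Cy z := by rw [hgk]; exact Or.inr ⟨j, t, rfl⟩
      have hd := hdepCy z k hk hmem
      rw [hgk] at hd
      simp only [xDep] at hd
      have hti := t.isLt
      exact Or.inr (Or.inr ⟨z, j, t, by omega, rfl⟩)
  have huniqI : ∀ (i : Fin (3 * η)) j j' (t t' : Fin M) k k', k ≤ N → k' ≤ N →
      g k = XVtx.ipath i j t → g k' = XVtx.ipath i j' t' → k = k' ∧ j = j' := by
    intro i j j' t t' k k' hk hk' h1 h2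
    have hm1 : g k ∈ Ci S i := by rw [h1]; exact Or.inr ⟨j, t, hmemS k hk i j t h1, rfl⟩
    have hm2 : g k' ∈ Ci S i := by rw [h2]; exact Or.inr ⟨j', t', hmemS k' hk' i j' t' h2, rfl⟩
    have hd1 := hdepCi i k hk hm1
    have hd2 := hdepCi i k' hk' hm2
    have hkk : k = k' := by
      rcases le_total k k' with h | h
      · exact hsingleCi i k k' h hk' hm1 hm2 hd1 hd2
      · exact (hsingleCi i k' k h hk hm2 hm1 hd2 hd1).symm
    refine ⟨hkk, ?_⟩
    rw [hkk, h2] at h1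
    injection h1 with _ hj _
    exact hj.symm
  have huniqY : ∀ (z : Fin (μ - η)) j j' (t t' : Fin M) k k', k ≤ N → k' ≤ N →
      g k = XVtx.ypath z j t → g k' = XVtx.ypath z j' t' → k = k' ∧ j = j' := by
    intro z j j' t t' k k' hk hk' h1 h2
    have hm1 : g k ∈ Cy z := by rw [h1]; exact Or.inr ⟨j, t, rfl⟩
    have hm2 : g k' ∈ Cy z := by rw [h2]; exact Or.inr ⟨j', t', rfl⟩
    have hd1 := hdepCy z k hk hm1
    have hd2 := hdepCy z k' hk' hm2
    have hkk : k = k' := by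
      rcases le_total k k' with h | h
      · exact hsingleCy z k k' h hk' hm1 hm2 hd1 hd2
      · exact (hsingleCy z k' k h hk hm2 hm1 hd2 hd1).symm
    refine ⟨hkk, ?_⟩
    rw [hkk, h2] at h1
    injection h1 with _ hj _
    exact hj.symm
  have hble : ∀ x : XVtx η μ M, xBlk x ≤ μ - 1 := by
    intro x
    rcases x with ⟨j, t⟩ | i | ⟨i, j, t⟩ | z | ⟨z, j, t⟩ <;> simp only [xBlk] <;>
      first
        | omega
        | (have := j.isLt; omega)
  have hblk0 : xBlk (g 0) = 0 := by rw [hg0]; rfl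
  have hblkN : xBlk (g N) = μ - 1 := by rw [hgN]; rfl
  have hcross : ∀ d : ℕ, d + 1 ≤ μ - 1 → ∃ m, 0 < m ∧ m ≤ N ∧
      (∃ (j1 j2 : Fin μ) (t1 t2 : Fin 4), (j1 : ℕ) = d ∧ (t1 : ℕ) = 3 ∧ (j2 : ℕ) = d + 1 ∧
        (t2 : ℕ) = 0 ∧ g (m - 1) = XVtx.u j1 t1 ∧ g m = XVtx.u j2 t2) ∧
      (∀ k, k ≤ N → ((d : ℕ) < xBlk (g k) ↔ m ≤ k)) := by
    intro d hd
    have hex : ∃ k, k ≤ N ∧ d < xBlk (g k) := ⟨N, le_rfl, by rw [hblkN]; omega⟩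
    obtain ⟨hmN, hmblk⟩ := Nat.find_spec hex
    set m := Nat.find hex with hmdef
    have hbelow : ∀ k, k < m → ¬ d < xBlk (g k) := fun k hk hblk =>
      Nat.find_min hex hk ⟨by omega, hblk⟩
    have hm0 : 0 < m := by
      rcases Nat.eq_zero_or_pos m with h0 | h
      · exfalso
        rw [h0] at hmblk
        rw [hblk0] at hmblk
        omega
      · exact h
    have hadjm : (xGraph S).Adj (g (m - 1)) (g m) := by
      have h := hadj (m - 1) (by omega)
      rwa [show m - 1 + 1 = m by omega] at h
    have hb1 := hbelow (m - 1) (by omega)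
    rcases adj_good hM (htip (m - 1) (by omega)) (htip m hmN) hadjm with hF | hF | ⟨hbk, -⟩
    rotate_left
    · exfalso
      have := fwd_blk hF
      omega
    · exfalso; omega
    obtain ⟨j1, j2, t1, t2, ht1, ht2, hj12, he1, he2⟩ := hF
    have hbv1 : xBlk (g (m - 1)) = (j1 : ℕ) := by rw [he1]; rfl
    have hbv2 : xBlk (g m) = (j2 : ℕ) := by rw [he2]; rfl
    have hj1d : (j1 : ℕ) = d := by omega
    have hafter : ∀ k, m ≤ k → k ≤ N → d < xBlk (g k) := by
      by_contra hno
      push_neg at hno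
      obtain ⟨hk0m, hk0N, hk0b⟩ := Nat.find_spec hno
      set k0 := Nat.find hno with hk0def
      have hk0m' : m < k0 := by
        rcases Nat.lt_or_ge m k0 with h | h
        · exact h
        · exfalso
          have : k0 = m := by omega
          rw [this] at hk0b
          omega
      have hprev : d < xBlk (g (k0 - 1)) := by
        by_contra hc
        push_neg at hc
        exact Nat.find_min hno (show k0 - 1 < k0 by omega) ⟨by omega, by omega, hc⟩
      have hadjk := hadj (k0 - 1) (by omega)
      rw [show k0 - 1 + 1 = k0 by omega] at hadjk
      rcases adj_good hM (htip (k0 - 1) (by omega)) (htip k0 hk0N) hadjk with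
        hF | hF | ⟨hbk, -⟩
      · exfalso
        have := fwd_blk hF
        omega
      · obtain ⟨ja, jb, ta, tb, hta, htb, hjab, hea, heb⟩ := hF
        have hbva : xBlk (g k0) = (ja : ℕ) := by rw [hea]; rfl
        have hbvb : xBlk (g (k0 - 1)) = (jb : ℕ) := by rw [heb]; rfl
        have heq : g k0 = g (m - 1) := by
          rw [hea, he1]
          congr 1
          · exact Fin.ext (by omega)
          · exact Fin.ext (by omega)
        have := hinj k0 (m - 1) hk0N (by omega) heq
        omega
      · exfalso; omega
    refine ⟨m, hm0, hmN, ⟨j1, j2, t1, t2, hj1d, ht1, by omega, ht2, he1, he2⟩, ?_⟩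
    intro k hk
    constructor
    · intro hblk
      by_contra hc
      push_neg at hc
      exact absurd hblk (hbelow k hc)
    · intro hmk
      exact hafter k hmk hk
  have hseg : ∀ j : Fin μ, ∃ a b, a ≤ b ∧ b ≤ N ∧
      (∃ t0 : Fin 4, (t0 : ℕ) = 0 ∧ g a = XVtx.u j t0) ∧
      (∃ t3 : Fin 4, (t3 : ℕ) = 3 ∧ g b = XVtx.u j t3) ∧
      (∀ k, a ≤ k → k ≤ b → xBlk (g k) = (j : ℕ)) := by
    intro j
    have hjlt := j.isLt
    by_cases hj0 : (j : ℕ) = 0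
    · by_cases hjt : (j : ℕ) = μ - 1
      · refine ⟨0, N, by omega, le_rfl, ⟨⟨0, by omega⟩, rfl, ?_⟩, ⟨⟨3, by omega⟩, rfl, ?_⟩, ?_⟩
        · rw [hg0]; congr 1; exact Fin.ext (by omega)
        · rw [hgN]; congr 1; exact Fin.ext (by omega)
        · intro k h0k hkN
          have := hble (g k)
          omega
      · obtain ⟨m, hm0, hmN, ⟨j1, j2, t1, t2, hj1, ht1, hj2, ht2, he1, he2⟩, hiff⟩ :=
          hcross (j : ℕ) (by omega)
        have hjeq : j = ⟨0, hμpos⟩ := Fin.ext (by show (j : ℕ) = 0; omega)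
        have hjeq1 : j = j1 := Fin.ext (by show (j : ℕ) = (j1 : ℕ); omega)
        refine ⟨0, m - 1, by omega, by omega, ⟨⟨0, by omega⟩, rfl, ?_⟩, ⟨t1, ht1, ?_⟩, ?_⟩
        · rw [hg0]; exact congrArg (fun w => XVtx.u w (⟨0, by omega⟩ : Fin 4)) hjeq.symm
        · rw [he1]; exact congrArg (fun w => XVtx.u w t1) hjeq1.symm
        · intro k h0k hkm
          have h1 : ¬ (j : ℕ) < xBlk (g k) := by
            rw [hiff k (by omega)]
            omega
          omega
    · obtain ⟨ma, hma0, hmaN, ⟨ja1, ja2, ta1, ta2, hja1, hta1, hja2, hta2, hea1, hea2⟩, hiffa⟩ :=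
        hcross ((j : ℕ) - 1) (by omega)
      by_cases hjt : (j : ℕ) = μ - 1
      · have hjeq : j = ja2 := Fin.ext (by show (j : ℕ) = (ja2 : ℕ); omega)
        have hjeq' : j = ⟨μ - 1, by omega⟩ := Fin.ext (by show (j : ℕ) = μ - 1; omega)
        refine ⟨ma, N, hmaN, le_rfl, ⟨ta2, hta2, ?_⟩, ⟨⟨3, by omega⟩, rfl, ?_⟩, ?_⟩
        · rw [hea2]; exact congrArg (fun w => XVtx.u w ta2) hjeq.symm
        · rw [hgN]; exact congrArg (fun w => XVtx.u w (⟨3, by omega⟩ : Fin 4)) hjeq'.symm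
        · intro k hak hkN
          have h2 := (hiffa k (by omega)).mpr (by omega)
          have := hble (g k)
          omega
      · obtain ⟨mb, hmb0, hmbN, ⟨jb1, jb2, tb1, tb2, hjb1, htb1, hjb2, htb2, heb1, heb2⟩, hiffb⟩ :=
          hcross (j : ℕ) (by omega)
        have hmamb : ma ≤ mb - 1 := by
          by_contra hc
          push_neg at hc
          have h1 : (j : ℕ) < xBlk (g ma) := (hiffb ma hmaN).mpr (by omega)
          have h2 : xBlk (g ma) = (ja2 : ℕ) := by rw [hea2]; rfl
          omega
        have hjeq : j = ja2 := Fin.ext (by show (j : ℕ) = (ja2 : ℕ); omega)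
        have hjeq1 : j = jb1 := Fin.ext (by show (j : ℕ) = (jb1 : ℕ); omega)
        refine ⟨ma, mb - 1, hmamb, by omega, ⟨ta2, hta2, ?_⟩, ⟨tb1, htb1, ?_⟩, ?_⟩
        · rw [hea2]; exact congrArg (fun w => XVtx.u w ta2) hjeq.symm
        · rw [heb1]; exact congrArg (fun w => XVtx.u w tb1) hjeq1.symm
        · intro k hak hkb
          have h1 := (hiffa k (by omega)).mpr (by omega)
          have h2 : ¬ (j : ℕ) < xBlk (g k) := by
            rw [hiffb k (by omega)]
            omega
          omega
  have htopblk : ∀ j : Fin μ,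
      (¬ ∃ k, k ≤ N ∧ ∃ (z : Fin (μ - η)) (t : Fin M), g k = XVtx.ypath z j t) →
      ∀ i ∈ S j, ∃ k, k ≤ N ∧ ∃ t : Fin M, g k = XVtx.ipath i j t := by
    intro j hnoy i hij
    obtain ⟨a, b, hab, hbN, ⟨t0, ht0, hga⟩, ⟨t3, ht3, hgb⟩, hblkj⟩ := hseg j
    have hRa : xRnk S (g a) = 0 := by rw [hga]; show 2 * (t0 : ℕ) = 0; omega
    have hRb : xRnk S (g b) = 6 := by rw [hgb]; show 2 * (t3 : ℕ) = 6; omega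
    have hstep : ∀ k, a ≤ k → k < b →
        xRnk S (g k) + 1 = xRnk S (g (k + 1)) ∨ xRnk S (g (k + 1)) + 1 = xRnk S (g k) := by
      intro k hak hkb
      have hb1 := hblkj k hak (by omega)
      have hb2 := hblkj (k + 1) (by omega) (by omega)
      rcases adj_good hM (htip k (by omega)) (htip (k + 1) (by omega)) (hadj k (by omega)) with
        hF | hF | ⟨-, hc⟩
      · exfalso; have := fwd_blk hF; omega
      · exfalso; have := fwd_blk hF; omega
      rcases hc with hY | hY | h | h
      · exfalso
        obtain ⟨z, j', t, he⟩ := hY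
        rw [he] at hb1
        have hjj : j' = j := Fin.ext hb1
        exact hnoy ⟨k, by omega, z, t, by rw [he, hjj]⟩
      · exfalso
        obtain ⟨z, j', t, he⟩ := hY
        rw [he] at hb2
        have hjj : j' = j := Fin.ext hb2
        exact hnoy ⟨k + 1, by omega, z, t, by rw [he, hjj]⟩
      · exact Or.inl h
      · exact Or.inr h
    have hIVT : ∀ v, v ≤ 6 → ∃ k, a ≤ k ∧ k ≤ b ∧ xRnk S (g k) = v := by
      intro v hv
      have hexv : ∃ k, a ≤ k ∧ k ≤ b ∧ v ≤ xRnk S (g k) := ⟨b, hab, le_rfl, by omega⟩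
      obtain ⟨hka, hkb, hkv⟩ := Nat.find_spec hexv
      set k0 := Nat.find hexv with hk0def
      rcases Nat.eq_or_lt_of_le hka with heq | hlt
      · rw [← heq] at hkv
        exact ⟨a, le_rfl, hab, by omega⟩
      · have hltv : xRnk S (g (k0 - 1)) < v := by
          by_contra hc
          push_neg at hc
          exact Nat.find_min hexv (show k0 - 1 < k0 by omega) ⟨by omega, by omega, hc⟩
        have hs := hstep (k0 - 1) (by omega) (by omega)
        rw [show k0 - 1 + 1 = k0 by omega] at hs
        refine ⟨k0, hka, hkb, ?_⟩
        rcases hs with h | h <;> omega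
    have hrk := rank_lt_three (hcard j) hij
    obtain ⟨k, hka, hkb, hkr⟩ := hIVT (2 * rankIn S i j + 1) (by omega)
    rcases htip k (by omega) with ⟨j', t', he⟩ | ⟨i', j', t', hmem', -, he⟩ |
      ⟨z', j', t', -, he⟩
    · exfalso
      rw [he] at hkr
      have : (2 : ℕ) * (t' : ℕ) = 2 * rankIn S i j + 1 := hkr
      omega
    · have hbk := hblkj k hka hkb
      rw [he] at hbk
      have hjj : j' = j := Fin.ext hbk
      rw [he] at hkr
      have hkr' : 2 * rankIn S i' j' + 1 = 2 * rankIn S i j + 1 := hkr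
      rw [hjj] at hkr'
      have hmem2 : i' ∈ S j := hjj ▸ hmem'
      have hii : i' = i := rank_inj hmem2 hij (by omega)
      exact ⟨k, by omega, t', by rw [he, hii, hjj]⟩
    · exfalso
      have hbk := hblkj k hka hkb
      rw [he] at hbk
      have hjj : j' = j := Fin.ext hbk
      exact hnoy ⟨k, by omega, z', t', by rw [he, hjj]⟩
  set E : Finset (Fin μ) := Finset.univ.filter
    (fun j => ¬ ∃ k, k ≤ N ∧ ∃ (z : Fin (μ - η)) (t : Fin M), g k = XVtx.ypath z j t)
    with hEdef
  set Bad : Finset (Fin μ) := Finset.univ.filter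
    (fun j => ∃ k, k ≤ N ∧ ∃ (z : Fin (μ - η)) (t : Fin M), g k = XVtx.ypath z j t)
    with hBdef
  have hEB : Bad.card + E.card = μ := by
    rw [hBdef, hEdef]
    rw [Finset.card_filter_add_card_filter_not]
    simp [Finset.card_univ]
  have hBad : Bad.card ≤ μ - η := by
    rcases Finset.eq_empty_or_nonempty Bad with hemp | ⟨j0, hj0⟩
    · rw [hemp]; simp
    · obtain ⟨k0, hk0, z0, t0, -⟩ := (Finset.mem_filter.mp hj0).2
      have hcard' : Bad.card ≤ (Finset.univ : Finset (Fin (μ - η))).card := by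
        apply Finset.card_le_card_of_injOn
          (fun j => if h : (∃ k, k ≤ N ∧ ∃ (z : Fin (μ - η)) (t : Fin M),
            g k = XVtx.ypath z j t) then (h.choose_spec.2).choose else z0)
          (fun _ _ => Finset.mem_univ _)
        intro j1 hj1 j2 hj2 hfe
        have h1 := (Finset.mem_filter.mp hj1).2
        have h2 := (Finset.mem_filter.mp hj2).2
        simp only [dif_pos h1, dif_pos h2] at hfe
        obtain ⟨tt1, he1⟩ := (h1.choose_spec.2).choose_spec
        obtain ⟨tt2, he2⟩ := (h2.choose_spec.2).choose_spec
        rw [← hfe] at he2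
        exact (huniqY _ j1 j2 tt1 tt2 _ _ h1.choose_spec.1 h2.choose_spec.1 he1 he2).2
      rw [Finset.card_univ, Fintype.card_fin] at hcard'
      exact hcard'
  have hdisj : ∀ j1 ∈ E, ∀ j2 ∈ E, j1 ≠ j2 → Disjoint (S j1) (S j2) := by
    intro j1 hj1 j2 hj2 hne
    rw [Finset.disjoint_left]
    intro i hi1 hi2
    obtain ⟨k1, hk1, t1, he1⟩ := htopblk j1 ((Finset.mem_filter.mp hj1).2) i hi1
    obtain ⟨k2, hk2, t2, he2⟩ := htopblk j2 ((Finset.mem_filter.mp hj2).2) i hi2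
    exact hne (huniqI i j1 j2 t1 t2 k1 k2 hk1 hk2 he1 he2).2
  have hbU : (E.biUnion S).card = 3 * E.card := by
    rw [Finset.card_biUnion hdisj]
    rw [Finset.sum_congr rfl (fun j _ => hcard j)]
    rw [Finset.sum_const, smul_eq_mul, mul_comm]
  have hle3 : (E.biUnion S).card ≤ 3 * η := by
    have h := Finset.card_le_univ (E.biUnion S)
    rwa [Fintype.card_fin] at h
  have hEeq : E.card = η := by omega
  have huniv : E.biUnion S = Finset.univ := by
    apply Finset.eq_univ_of_card
    rw [hbU, hEeq, Fintype.card_fin]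
  refine ⟨E, hEeq, ?_⟩
  intro i
  have hiU : i ∈ E.biUnion S := huniv ▸ Finset.mem_univ i
  obtain ⟨j, hjE, hij⟩ := Finset.mem_biUnion.mp hiU
  refine ⟨j, ⟨hjE, hij⟩, ?_⟩
  rintro j' ⟨hj'E, hij'⟩
  by_contra hne
  exact (Finset.disjoint_left.mp (hdisj j' hj'E j hjE hne)) hij' hij
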